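/- Theorem 1.2 (Hölder estimate): In an augmented tree induced by Φ satisfying (A1) and (A2), there is a constant C > 0 such that for any two geodesic rays (x_n) and (y_n) with ⋂_{n≥0} Φ(x_n) = {a} and ⋂_{n≥0} Φ(y_n) = {b} and a ≠ b, setting m = liminf_{n→∞} |x_n ∧ y_n| (which is finite), one has C⁻¹ |a − b| ≤ r^m ≤ C |a − b|, where |·| on the right of r^m denotes the Euclidean distance in ℝ^d. -/

import Mathlib

open Metric Filter

namespace HypIFS

/-- A rooted tree: a connected, locally finite simple graph with no cycles
and a distinguished root. -/
structure RootedTree (X : Type*) where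
  G : SimpleGraph X
  isTree : G.IsTree
  locFin : ∀ x : X, {y | G.Adj x y}.Finite
  root : X

variable {X : Type*}

/-- the level `|x|` of a vertex: graph distance from the root. -/
noncomputable def lvl (T : RootedTree X) (x : X) : ℕ := T.G.dist T.root x

/-- `p` is the parent `x⁻¹` of `x`. -/
def IsParent (T : RootedTree X) (p x : X) : Prop :=
  T.G.Adj p x ∧ lvl T p + 1 = lvl T x

/-- The graph `(X, 𝓔_v ∪ 𝓔_h)`. -/
def augGraph (T : RootedTree X) (Eh : X → X → Prop) : SimpleGraph X where
  Adj x y := (T.G.Adj x y ∨ Eh x y ∨ Eh y x) ∧ x ≠ y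
  symm := ⟨by
    rintro x y ⟨h1 | h2 | h3, hne⟩
    · exact ⟨Or.inl h1.symm, hne.symm⟩
    · exact ⟨Or.inr (Or.inr h2), hne.symm⟩
    · exact ⟨Or.inr (Or.inl h3), hne.symm⟩⟩
  loopless := ⟨fun x h => h.2 rfl⟩

/-- The Gromov product `|x ∧ y| = ½(|x| + |y| − d(x,y))` with respect to a root `o`. -/
noncomputable def gprod {V : Type*} (G : SimpleGraph V) (o x y : V) : ℝ :=
  ((G.dist o x : ℝ) + (G.dist o y : ℝ) - (G.dist x y : ℝ)) / 2

/-- Gromov hyperbolicity of a graph with basepoint `o`. -/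
def GromovHyperbolic {V : Type*} (G : SimpleGraph V) (o : V) : Prop :=
  ∃ δ : ℝ, 0 ≤ δ ∧ ∀ x y z : V,
    min (gprod G o x z) (gprod G o z y) - δ ≤ gprod G o x y

/-- The distance `dist(A, B)` between two subsets of a metric space. -/
noncomputable def setDist {E : Type*} [PseudoMetricSpace E] (A B : Set E) : ℝ :=
  sInf (Set.image2 dist A B)

/-- The horizontal edge set `𝓔_h` induced by the set-valued map `Φ`:
`(x,y) ∈ 𝓔_h` iff `|x| = |y|`, `x ≠ y` and `dist(Φ(x), Φ(y)) ≤ κ r^{|x|}`. -/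
def EhPhi {d : ℕ} (T : RootedTree X) (Φ : X → Set (EuclideanSpace ℝ (Fin d)))
    (r κ : ℝ) (x y : X) : Prop :=
  lvl T x = lvl T y ∧ x ≠ y ∧ setDist (Φ x) (Φ y) ≤ κ * r ^ lvl T x

/-- A geodesic ray: `x 0` is the root, `|x n| = n`, and consecutive vertices are
joined by vertical (tree) edges. -/
def IsGeodesicRay (T : RootedTree X) (x : ℕ → X) : Prop :=
  x 0 = T.root ∧ ∀ n : ℕ, lvl T (x n) = n ∧ T.G.Adj (x n) (x (n + 1))

-- AUX START

lemma lvl_root (T : RootedTree X) : lvl T T.root = 0 := SimpleGraph.dist_self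

lemma lvl_le_of_adj (T : RootedTree X) {p q : X} (h : T.G.Adj p q) :
    lvl T q ≤ lvl T p + 1 := by
  have h1 : T.G.dist T.root q ≤ T.G.dist T.root p + T.G.dist p q :=
    T.isTree.isConnected.dist_triangle
  have h2 : T.G.dist p q ≤ 1 := by
    simpa using SimpleGraph.dist_le (SimpleGraph.Walk.cons h SimpleGraph.Walk.nil)
  unfold lvl; omega

lemma lvl_ne_of_adj (T : RootedTree X) {p q : X} (h : T.G.Adj p q) :
    lvl T p ≠ lvl T q := by
  classical
  intro hm
  obtain ⟨P, hP, hPl⟩ := (T.isTree.isConnected T.root p).exists_path_of_dist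
  obtain ⟨Q, hQ, hQl⟩ := (T.isTree.isConnected T.root q).exists_path_of_dist
  have hq : q ∉ P.support := by
    intro hq
    have hspec := P.take_spec hq
    have hlen : (P.takeUntil q hq).length + (P.dropUntil q hq).length = P.length := by
      rw [← SimpleGraph.Walk.length_append, hspec]
    have h1 : T.G.dist T.root q ≤ (P.takeUntil q hq).length := SimpleGraph.dist_le _
    have h2 : (P.dropUntil q hq).length = 0 := by
      unfold lvl at hm; omega
    exact h.ne (SimpleGraph.Walk.eq_of_length_eq_zero h2).symm
  have hW : ((SimpleGraph.Walk.cons h.symm P.reverse).reverse).IsPath := by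
    refine SimpleGraph.Walk.IsPath.reverse ?_
    exact hP.reverse.cons (by simpa using hq)
  have huniq := SimpleGraph.isAcyclic_iff_path_unique.mp T.isTree.IsAcyclic
    (⟨_, hW⟩ : T.G.Path T.root q) ⟨Q, hQ⟩
  have hlen2 : ((SimpleGraph.Walk.cons h.symm P.reverse).reverse).length = Q.length := by
    rw [Subtype.ext_iff] at huniq
    exact congrArg SimpleGraph.Walk.length huniq
  simp only [SimpleGraph.Walk.length_reverse, SimpleGraph.Walk.length_cons] at hlen2
  unfold lvl at hm
  omega

lemma aug_adj_of_tree (T : RootedTree X) (Eh : X → X → Prop) {u v : X}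
    (h : T.G.Adj u v) : (augGraph T Eh).Adj u v :=
  show (T.G.Adj u v ∨ Eh u v ∨ Eh v u) ∧ u ≠ v from ⟨Or.inl h, h.ne⟩

lemma aug_connected (T : RootedTree X) (Eh : X → X → Prop) :
    (augGraph T Eh).Connected :=
  T.isTree.isConnected.mono (fun _ _ h => aug_adj_of_tree T Eh h)

lemma aug_adj_lvl {d : ℕ} (T : RootedTree X) (Φ : X → Set (EuclideanSpace ℝ (Fin d)))
    (r κ : ℝ) {u v : X} (h : (augGraph T (EhPhi T Φ r κ)).Adj u v) :
    lvl T v ≤ lvl T u + 1 ∧ lvl T u ≤ lvl T v + 1 := by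
  rcases (show (T.G.Adj u v ∨ EhPhi T Φ r κ u v ∨ EhPhi T Φ r κ v u) ∧ u ≠ v from h).1 with h' | h' | h'
  · exact ⟨lvl_le_of_adj T h', lvl_le_of_adj T h'.symm⟩
  · rw [h'.1]; omega
  · rw [h'.1]; omega

lemma walk_lvl_lower {V : Type*} {G : SimpleGraph V} (f : V → ℕ)
    (hadj : ∀ u v : V, G.Adj u v → f v ≤ f u + 1 ∧ f u ≤ f v + 1)
    {u v : V} (W : G.Walk u v) :
    ∀ i : ℕ, ((f u : ℤ) ≤ f (W.getVert i) + i) ∧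
      (i ≤ W.length → (f v : ℤ) ≤ f (W.getVert i) + ((W.length : ℤ) - i)) := by
  induction W with
  | nil =>
    intro i
    constructor
    · simp [SimpleGraph.Walk.getVert]
    · intro hi
      simp only [SimpleGraph.Walk.length_nil, Nat.le_zero] at hi
      subst hi
      simp [SimpleGraph.Walk.getVert]
  | @cons a b c hab W ih =>
    intro i
    cases i with
    | zero =>
      have h1 := hadj _ _ hab
      have h2 := (ih 0).2 (Nat.zero_le _)
      constructor
      · simp
      · intro _
        simp only [SimpleGraph.Walk.getVert_zero, SimpleGraph.Walk.length_cons] at h2 ⊢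
        push_cast at h2 ⊢
        omega
    | succ i =>
      have h1 := hadj _ _ hab
      constructor
      · have hA := (ih i).1
        rw [SimpleGraph.Walk.getVert_cons_succ]
        push_cast at hA ⊢
        omega
      · intro hi
        rw [SimpleGraph.Walk.length_cons] at hi
        have hB := (ih i).2 (by omega)
        rw [SimpleGraph.Walk.getVert_cons_succ, SimpleGraph.Walk.length_cons]
        push_cast at hB ⊢
        omega

lemma lvl_le_dist_aug {d : ℕ} (T : RootedTree X) (Φ : X → Set (EuclideanSpace ℝ (Fin d)))
    (r κ : ℝ) (v : X) :
    lvl T v ≤ (augGraph T (EhPhi T Φ r κ)).dist T.root v := by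
  obtain ⟨W, hW⟩ := ((aug_connected T (EhPhi T Φ r κ)) T.root v).exists_walk_length_eq_dist
  have h := (walk_lvl_lower (lvl T) (fun u v h => aug_adj_lvl T Φ r κ h) W 0).2 (Nat.zero_le _)
  rw [SimpleGraph.Walk.getVert_zero, lvl_root, hW] at h
  omega

lemma ray_walk {d : ℕ} (T : RootedTree X) (Φ : X → Set (EuclideanSpace ℝ (Fin d)))
    (r κ : ℝ) {x : ℕ → X} (hx : IsGeodesicRay T x) (i n : ℕ) :
    ∃ W : (augGraph T (EhPhi T Φ r κ)).Walk (x i) (x (i + n)), W.length = n := by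
  induction n with
  | zero => exact ⟨SimpleGraph.Walk.nil, rfl⟩
  | succ n ih =>
    obtain ⟨W, hW⟩ := ih
    have hadj : (augGraph T (EhPhi T Φ r κ)).Adj (x (i + n)) (x (i + n + 1)) :=
      aug_adj_of_tree T _ ((hx.2 (i + n)).2)
    exact ⟨W.concat hadj, by rw [SimpleGraph.Walk.length_concat, hW]⟩

lemma dist_root_ray {d : ℕ} (T : RootedTree X) (Φ : X → Set (EuclideanSpace ℝ (Fin d)))
    (r κ : ℝ) {x : ℕ → X} (hx : IsGeodesicRay T x) (n : ℕ) :
    (augGraph T (EhPhi T Φ r κ)).dist T.root (x n) = n := by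
  obtain ⟨W, hW⟩ := ray_walk T Φ r κ hx 0 n
  have h0 : x 0 = T.root := hx.1
  have hle : (augGraph T (EhPhi T Φ r κ)).dist T.root (x n) ≤ n := by
    have := SimpleGraph.dist_le ((W.copy h0 (by rw [Nat.zero_add])))
    rwa [SimpleGraph.Walk.length_copy, hW] at this
  have hge := lvl_le_dist_aug T Φ r κ (x n)
  rw [(hx.2 n).1] at hge
  omega

lemma setDist_le {E : Type*} [PseudoMetricSpace E] {A B : Set E} {a b : E}
    (ha : a ∈ A) (hb : b ∈ B) : setDist A B ≤ dist a b :=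
  csInf_le ⟨0, fun t ht => by obtain ⟨p, hp, q, hq, rfl⟩ := ht; exact dist_nonneg⟩
    (Set.mem_image2_of_mem ha hb)

lemma setDist_comm {E : Type*} [PseudoMetricSpace E] (A B : Set E) :
    setDist A B = setDist B A := by
  unfold setDist
  rw [Set.image2_comm (fun p q => dist_comm p q)]

lemma dist_le_setDist_add {E : Type*} [PseudoMetricSpace E] {A B : Set E}
    (hA : Bornology.IsBounded A) (hB : Bornology.IsBounded B)
    {p q : E} (hp : p ∈ A) (hq : q ∈ B) :
    dist p q ≤ diam A + setDist A B + diam B := by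
  have h : dist p q - diam A - diam B ≤ setDist A B := by
    apply le_csInf (Set.Nonempty.image2 ⟨p, hp⟩ ⟨q, hq⟩)
    rintro t ⟨u, hu, w, hw, rfl⟩
    have h1 : dist p q ≤ dist p u + dist u w + dist w q := dist_triangle4 p u w q
    have h2 : dist p u ≤ diam A := dist_le_diam_of_mem hA hp hu
    have h3 : dist w q ≤ diam B := dist_le_diam_of_mem hB hw hq
    linarith
  linarith

lemma edge_setDist {d : ℕ} (T : RootedTree X) (Φ : X → Set (EuclideanSpace ℝ (Fin d)))
    (r κ : ℝ) (hr0 : 0 < r) (hκ : 0 < κ)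
    (hΦne : ∀ x, (Φ x).Nonempty)
    (hA1 : ∀ p x, IsParent T p x → Φ x ⊆ Φ p)
    {u v : X} (h : (augGraph T (EhPhi T Φ r κ)).Adj u v) :
    setDist (Φ u) (Φ v) ≤ κ * r ^ (min (lvl T u) (lvl T v)) := by
  have hpos : (0:ℝ) ≤ κ * r ^ (min (lvl T u) (lvl T v)) :=
    mul_nonneg hκ.le (pow_nonneg hr0.le _)
  rcases (show (T.G.Adj u v ∨ EhPhi T Φ r κ u v ∨ EhPhi T Φ r κ v u) ∧ u ≠ v from h).1 with hT | hE | hE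
  · have hne := lvl_ne_of_adj T hT
    have h1 := lvl_le_of_adj T hT
    have h2 := lvl_le_of_adj T hT.symm
    rcases (by omega : lvl T u + 1 = lvl T v ∨ lvl T v + 1 = lvl T u) with hc | hc
    · obtain ⟨z, hz⟩ := hΦne v
      have := setDist_le (hA1 u v ⟨hT, hc⟩ hz) hz
      simp only [dist_self] at this
      exact this.trans hpos
    · obtain ⟨z, hz⟩ := hΦne u
      rw [setDist_comm]
      have := setDist_le (hA1 v u ⟨hT.symm, hc⟩ hz) hz
      simp only [dist_self] at this
      exact this.trans hpos
  · have := hE.2.2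
    rwa [min_eq_left (le_of_eq hE.1)]
  · rw [setDist_comm, min_eq_right (le_of_eq hE.1)]
    exact hE.2.2

lemma geom_aux {s : ℝ} (hs0 : 0 ≤ s) (hs1 : s < 1) (n : ℕ) :
    ∑ i ∈ Finset.range n, s ^ i ≤ 1 / (1 - s) := by
  have h := geom_sum_mul s n
  have hsn : 0 ≤ s ^ n := pow_nonneg hs0 n
  have h1s : 0 < 1 - s := by linarith
  rw [le_div_iff₀ h1s]
  nlinarith [h]

lemma sum_min_le {s : ℝ} (hs0 : 0 ≤ s) (hs1 : s < 1) (k : ℕ) :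
    ∑ i ∈ Finset.range (k + 1), s ^ (k - 2 * min i (k - i)) ≤ 2 / (1 - s) := by
  classical
  have hgeom := geom_aux hs0 hs1 (k + 1)
  have hbound : ∀ (A : Finset ℕ) (e : ℕ → ℕ), (∀ i ∈ A, e i ≤ k) →
      (∀ i ∈ A, ∀ j ∈ A, e i = e j → i = j) →
      ∑ i ∈ A, s ^ (e i) ≤ 1 / (1 - s) := by
    intro A e he hinj
    calc ∑ i ∈ A, s ^ (e i) = ∑ j ∈ A.image e, s ^ j := (Finset.sum_image hinj).symm
      _ ≤ ∑ j ∈ Finset.range (k + 1), s ^ j := by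
          apply Finset.sum_le_sum_of_subset_of_nonneg
          · intro j hj
            simp only [Finset.mem_image] at hj
            obtain ⟨i, hi, rfl⟩ := hj
            exact Finset.mem_range.mpr (Nat.lt_succ_of_le (he i hi))
          · exact fun j _ _ => pow_nonneg hs0 j
      _ ≤ 1 / (1 - s) := hgeom
  rw [← Finset.sum_filter_add_sum_filter_not (Finset.range (k + 1)) (fun i => 2 * i ≤ k)]
  have hc1 : ∀ i ∈ (Finset.range (k + 1)).filter (fun i => 2 * i ≤ k),
      s ^ (k - 2 * min i (k - i)) = s ^ (k - 2 * i) := by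
    intro i hi
    simp only [Finset.mem_filter, Finset.mem_range] at hi
    have : min i (k - i) = i := min_eq_left (by omega)
    rw [this]
  have hc2 : ∀ i ∈ (Finset.range (k + 1)).filter (fun i => ¬ 2 * i ≤ k),
      s ^ (k - 2 * min i (k - i)) = s ^ (2 * i - k) := by
    intro i hi
    simp only [Finset.mem_filter, Finset.mem_range] at hi
    have hmin : min i (k - i) = k - i := min_eq_right (by omega)
    rw [hmin]
    congr 1
    omega
  rw [Finset.sum_congr rfl hc1, Finset.sum_congr rfl hc2]
  have h1 : ∑ i ∈ (Finset.range (k + 1)).filter (fun i => 2 * i ≤ k),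
      s ^ (k - 2 * i) ≤ 1 / (1 - s) := by
    apply hbound _ (fun i => k - 2 * i)
    · intro i hi
      show k - 2 * i ≤ k
      omega
    · intro i hi j hj hij
      simp only [Finset.mem_filter, Finset.mem_range] at hi hj
      omega
  have h2 : ∑ i ∈ (Finset.range (k + 1)).filter (fun i => ¬ 2 * i ≤ k),
      s ^ (2 * i - k) ≤ 1 / (1 - s) := by
    apply hbound _ (fun i => 2 * i - k)
    · intro i hi
      simp only [Finset.mem_filter, Finset.mem_range] at hi
      show 2 * i - k ≤ k
      omega
    · intro i hi j hj hij
      simp only [Finset.mem_filter, Finset.mem_range] at hi hj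
      omega
  have h3 : 2 / (1 - s) = 1 / (1 - s) + 1 / (1 - s) := by ring
  linarith
set_option maxHeartbeats 1000000 in
/-- Theorem 1.2 (Hölder estimate): there is `C > 0` such that for geodesic rays
`(xₙ)`, `(yₙ)` with `⋂ₙ Φ(xₙ) = {a}`, `⋂ₙ Φ(yₙ) = {b}` and `a ≠ b`, the number
`m = liminfₙ |xₙ ∧ yₙ|` is finite and `C⁻¹ |a − b| ≤ r^m ≤ C |a − b|`. -/
theorem holder_estimate {d : ℕ} (T : RootedTree X)
    (Φ : X → Set (EuclideanSpace ℝ (Fin d))) (δ₀ r κ : ℝ)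
    (hδ₀ : 1 < δ₀) (hr0 : 0 < r) (hr1 : r < 1) (hκ : 0 < κ)
    (hΦc : ∀ x, IsCompact (Φ x)) (hΦne : ∀ x, (Φ x).Nonempty)
    (hA1 : ∀ p x, IsParent T p x → Φ x ⊆ Φ p)
    (hA2 : ∀ x, δ₀⁻¹ * r ^ lvl T x ≤ diam (Φ x) ∧ diam (Φ x) ≤ δ₀ * r ^ lvl T x) :
    ∃ C : ℝ, 0 < C ∧
      ∀ (x y : ℕ → X) (a b : EuclideanSpace ℝ (Fin d)),
        IsGeodesicRay T x → IsGeodesicRay T y →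
        (⋂ n : ℕ, Φ (x n)) = {a} → (⋂ n : ℕ, Φ (y n)) = {b} → a ≠ b →
        BddAbove (Set.range fun n : ℕ =>
          gprod (augGraph T (EhPhi T Φ r κ)) T.root (x n) (y n)) ∧
        C⁻¹ * dist a b ≤
          Real.rpow r (Filter.liminf (fun n : ℕ =>
            gprod (augGraph T (EhPhi T Φ r κ)) T.root (x n) (y n)) Filter.atTop) ∧
        Real.rpow r (Filter.liminf (fun n : ℕ =>
            gprod (augGraph T (EhPhi T Φ r κ)) T.root (x n) (y n)) Filter.atTop) ≤
          C * dist a b := by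

  classical
  set s : ℝ := r ^ ((1:ℝ)/2) with hs_def
  have hs0 : 0 < s := Real.rpow_pos_of_pos hr0 _
  have hs1 : s < 1 := Real.rpow_lt_one hr0.le hr1 (by norm_num)
  have h1s : 0 < 1 - s := by linarith
  set K : ℝ := (2 * δ₀ + κ) / r with hK_def
  have hKpos : 0 < K := div_pos (by linarith) hr0
  set C₁ : ℝ := K * (2 + 2 / (1 - s)) with hC1_def
  have hC1pos : 0 < C₁ := mul_pos hKpos (by positivity)
  set RC : ℝ := r ^ (-(3:ℝ)/2) / κ with hRC_def
  have hRCpos : 0 < RC := div_pos (Real.rpow_pos_of_pos hr0 _) hκ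
  have hδK : δ₀ ≤ K := by
    rw [hK_def, le_div_iff₀ hr0]
    nlinarith
  refine ⟨max C₁ RC, lt_of_lt_of_le hC1pos (le_max_left _ _), ?_⟩
  intro x y a b hx hy hia hib hab
  simp only [show ∀ t : ℝ, Real.rpow r t = r ^ t from fun _ => rfl]
  set A := augGraph T (EhPhi T Φ r κ) with hA_def
  have hconn : A.Connected := aug_connected T _
  have ha : ∀ n, a ∈ Φ (x n) := by
    intro n
    have h : a ∈ ⋂ n, Φ (x n) := by rw [hia]; exact rfl
    exact Set.mem_iInter.mp h n
  have hb' : ∀ n, b ∈ Φ (y n) := by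
    intro n
    have h : b ∈ ⋂ n, Φ (y n) := by rw [hib]; exact rfl
    exact Set.mem_iInter.mp h n
  have hdab : 0 < dist a b := dist_pos.mpr hab
  have hdxr : ∀ n, A.dist T.root (x n) = n := dist_root_ray T Φ r κ hx
  have hdyr : ∀ n, A.dist T.root (y n) = n := dist_root_ray T Φ r κ hy
  set g : ℕ → ℝ := fun n => gprod A T.root (x n) (y n) with hg_def
  have hg : ∀ n, g n = (n : ℝ) - (A.dist (x n) (y n) : ℝ) / 2 := by
    intro n
    show ((A.dist T.root (x n) : ℝ) + (A.dist T.root (y n) : ℝ)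
      - (A.dist (x n) (y n) : ℝ)) / 2 = _
    rw [hdxr n, hdyr n]
    ring
  -- ============ Claim A ============
  have keyA : ∀ n : ℕ, dist a b ≤ C₁ * r ^ ((n : ℝ) - (A.dist (x n) (y n) : ℝ) / 2) := by
    intro n
    obtain ⟨W, hW⟩ := (hconn (x n) (y n)).exists_walk_length_eq_dist
    set k := A.dist (x n) (y n) with hk_def
    have hlb := walk_lvl_lower (lvl T) (fun u v h => aug_adj_lvl T Φ r κ h) W
    have hlvln : lvl T (x n) = n := (hx.2 n).1
    have hlvlyn : lvl T (y n) = n := (hy.2 n).1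
    have hlvl : ∀ i, i ≤ k → ((n : ℤ) - min i (k - i) ≤ lvl T (W.getVert i)) := by
      intro i hik
      have h1 := (hlb i).1
      have h2 := (hlb i).2 (by omega : i ≤ W.length)
      rw [hlvln] at h1
      rw [hlvlyn, hW] at h2
      omega
    have hrpow : ∀ i, i ≤ k →
        (r : ℝ) ^ (lvl T (W.getVert i)) ≤ r ^ ((n : ℝ) - (min i (k - i) : ℕ)) := by
      intro i hik
      rw [← Real.rpow_natCast r (lvl T (W.getVert i))]
      apply Real.rpow_le_rpow_of_exponent_ge hr0 hr1.le
      exact_mod_cast hlvl i hik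
    set q : ℕ → EuclideanSpace ℝ (Fin d) := fun i => (hΦne (W.getVert i)).some with hq_def
    have hqmem : ∀ i, q i ∈ Φ (W.getVert i) := fun i => (hΦne _).some_mem
    set E : ℕ → ℝ := fun i => r ^ ((n : ℝ) - (min i (k - i) : ℕ)) with hE_def
    have hEpos : ∀ i, 0 < E i := fun i => Real.rpow_pos_of_pos hr0 _
    have hEr : ∀ i, E i ≤ E i / r := by
      intro i
      rw [le_div_iff₀ hr0]
      nlinarith [hEpos i]
    have hedge : ∀ i, i < k → dist (q i) (q (i + 1)) ≤ K * E i := by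
      intro i hik
      have hadj : A.Adj (W.getVert i) (W.getVert (i + 1)) :=
        W.adj_getVert_succ (by omega)
      have hsd := edge_setDist T Φ r κ hr0 hκ hΦne hA1 hadj
      have hd1 : diam (Φ (W.getVert i)) ≤ δ₀ * r ^ (lvl T (W.getVert i)) := (hA2 _).2
      have hd2 : diam (Φ (W.getVert (i+1))) ≤ δ₀ * r ^ (lvl T (W.getVert (i+1))) := (hA2 _).2
      have htri := dist_le_setDist_add (hΦc (W.getVert i)).isBounded
        (hΦc (W.getVert (i+1))).isBounded (hqmem i) (hqmem (i+1))
      have hb1 : (r : ℝ) ^ (lvl T (W.getVert i)) ≤ E i := hrpow i (le_of_lt hik)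
      have hb2' : (r : ℝ) ^ (lvl T (W.getVert (i+1)))
          ≤ r ^ ((n : ℝ) - (min (i+1) (k - (i+1)) : ℕ)) := hrpow (i+1) (by omega)
      have hmono : r ^ ((n : ℝ) - (min (i+1) (k - (i+1)) : ℕ)) ≤ E i / r := by
        have hle : ((n : ℝ) - (min i (k - i) : ℕ)) - 1
            ≤ (n : ℝ) - (min (i+1) (k - (i+1)) : ℕ) := by
          have hmm : (min (i+1) (k - (i+1))) ≤ min i (k - i) + 1 := by omega
          have hmm' := (Nat.cast_le (α := ℝ)).mpr hmm
          push_cast at hmm' ⊢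
          linarith
        calc r ^ ((n : ℝ) - (min (i+1) (k - (i+1)) : ℕ))
            ≤ r ^ (((n : ℝ) - (min i (k - i) : ℕ)) - 1) :=
              Real.rpow_le_rpow_of_exponent_ge hr0 hr1.le hle
          _ = E i / r := by rw [Real.rpow_sub hr0, Real.rpow_one]
      have hminlvl : (r : ℝ) ^ (min (lvl T (W.getVert i)) (lvl T (W.getVert (i+1))))
          ≤ E i / r := by
        rcases min_cases (lvl T (W.getVert i)) (lvl T (W.getVert (i+1))) with
          ⟨hmin, _⟩ | ⟨hmin, _⟩
        · rw [hmin]; exact hb1.trans (hEr i)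
        · rw [hmin]; exact hb2'.trans hmono
      have hδ0 : (0:ℝ) ≤ δ₀ := by linarith
      have t1 := hd1.trans (mul_le_mul_of_nonneg_left hb1 hδ0)
      have t2 := hsd.trans (mul_le_mul_of_nonneg_left hminlvl hκ.le)
      have t3 := hd2.trans (mul_le_mul_of_nonneg_left (hb2'.trans hmono) hδ0)
      have hfin : δ₀ * E i + κ * (E i / r) + δ₀ * (E i / r) ≤ K * E i := by
        have h' : K * E i = (2*δ₀+κ) * (E i / r) := by rw [hK_def]; ring
        rw [h']
        nlinarith [mul_nonneg hδ0 (sub_nonneg.mpr (hEr i))]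
      linarith
    have hW0 : W.getVert 0 = x n := W.getVert_zero
    have hWk : W.getVert k = y n := by rw [← hW]; exact W.getVert_length
    have hchain : dist a b ≤ diam (Φ (W.getVert 0))
        + (∑ i ∈ Finset.range k, dist (q i) (q (i+1))) + diam (Φ (W.getVert k)) := by
      have h1 : dist a (q 0) ≤ diam (Φ (W.getVert 0)) :=
        dist_le_diam_of_mem (hΦc _).isBounded (by rw [hW0]; exact ha n) (hqmem 0)
      have h2 : dist (q k) b ≤ diam (Φ (W.getVert k)) :=
        dist_le_diam_of_mem (hΦc _).isBounded (hqmem k) (by rw [hWk]; exact hb' n)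
      have h3 : dist (q 0) (q k) ≤ ∑ i ∈ Finset.range k, dist (q i) (q (i+1)) :=
        dist_le_range_sum_dist q k
      calc dist a b ≤ dist a (q 0) + dist (q 0) (q k) + dist (q k) b :=
            dist_triangle4 _ _ _ _
        _ ≤ _ := by linarith
    have hend : ∀ m : X, lvl T m = n → diam (Φ m) ≤ K * r ^ ((n:ℝ)) := by
      intro m hm
      have h := (hA2 m).2
      rw [hm] at h
      calc diam (Φ m) ≤ δ₀ * r ^ n := h
        _ ≤ K * r ^ ((n:ℝ)) := by
          rw [← Real.rpow_natCast r n]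
          exact mul_le_mul_of_nonneg_right hδK (Real.rpow_nonneg hr0.le _)
    have hE0 : E 0 = r ^ ((n:ℝ)) := by
      rw [hE_def]
      norm_num
    have hterm : ∀ i ∈ Finset.range (k+1),
        E i = r ^ ((n:ℝ) - (k:ℝ)/2) * s ^ (k - 2 * min i (k - i)) := by
      intro i hi
      simp only [Finset.mem_range] at hi
      have h2m : 2 * min i (k - i) ≤ k := by omega
      have hcast : ((k - 2 * min i (k - i) : ℕ) : ℝ) = (k:ℝ) - 2 * ((min i (k-i) : ℕ) : ℝ) := by
        rw [Nat.cast_sub h2m]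
        push_cast
        ring
      have hs_pow : (s : ℝ) ^ (k - 2 * min i (k - i))
          = r ^ (((k - 2 * min i (k - i) : ℕ) : ℝ) / 2) := by
        rw [hs_def, ← Real.rpow_natCast (r ^ ((1:ℝ)/2)) (k - 2 * min i (k - i)),
          ← Real.rpow_mul hr0.le]
        congr 1
        ring
      have hEi : E i = r ^ ((n : ℝ) - ((min i (k - i) : ℕ) : ℝ)) := rfl
      rw [hEi, hs_pow, ← Real.rpow_add hr0]
      congr 1
      rw [hcast]
      ring
    have hsum : ∑ i ∈ Finset.range (k+1), E i
        ≤ r ^ ((n:ℝ) - (k:ℝ)/2) * (2 / (1 - s)) := by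
      rw [Finset.sum_congr rfl hterm, ← Finset.mul_sum]
      exact mul_le_mul_of_nonneg_left (sum_min_le hs0.le hs1 k)
        (Real.rpow_pos_of_pos hr0 _).le
    have hsub : ∑ i ∈ Finset.range k, E i ≤ ∑ i ∈ Finset.range (k+1), E i :=
      Finset.sum_le_sum_of_subset_of_nonneg
        (Finset.range_subset_range.mpr (by omega)) (fun i _ _ => (hEpos i).le)
    have hrn : r ^ ((n:ℝ)) ≤ r ^ ((n:ℝ) - (k:ℝ)/2) := by
      apply Real.rpow_le_rpow_of_exponent_ge hr0 hr1.le
      have : (0:ℝ) ≤ (k:ℝ) := Nat.cast_nonneg k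
      linarith
    have hsumedge : ∑ i ∈ Finset.range k, dist (q i) (q (i+1))
        ≤ ∑ i ∈ Finset.range k, K * E i :=
      Finset.sum_le_sum (fun i hi => hedge i (Finset.mem_range.mp hi))
    have hKE : ∑ i ∈ Finset.range k, K * E i = K * ∑ i ∈ Finset.range k, E i :=
      (Finset.mul_sum _ _ _).symm
    have hlvl0 : lvl T (W.getVert 0) = n := by rw [hW0]; exact hlvln
    have hlvlk : lvl T (W.getVert k) = n := by rw [hWk]; exact hlvlyn
    have hbig : dist a b ≤ K * (2 * r ^ ((n:ℝ)) + ∑ i ∈ Finset.range k, E i) := by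
      have e0 := hend _ hlvl0
      have ek := hend _ hlvlk
      calc dist a b ≤ _ := hchain
        _ ≤ K * r ^ ((n:ℝ)) + K * (∑ i ∈ Finset.range k, E i) + K * r ^ ((n:ℝ)) := by
          rw [← hKE]
          linarith
        _ = K * (2 * r ^ ((n:ℝ)) + ∑ i ∈ Finset.range k, E i) := by ring
    calc dist a b ≤ K * (2 * r ^ ((n:ℝ)) + ∑ i ∈ Finset.range k, E i) := hbig
      _ ≤ K * (2 * r ^ ((n:ℝ) - (k:ℝ)/2) + r ^ ((n:ℝ) - (k:ℝ)/2) * (2 / (1 - s))) := by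
        apply mul_le_mul_of_nonneg_left _ hKpos.le
        have := hsub.trans hsum
        linarith
      _ = C₁ * r ^ ((n:ℝ) - (k:ℝ)/2) := by rw [hC1_def]; ring
    -- ============ boundedness ============
  have hg0 : ∀ n, 0 ≤ g n := by
    intro n
    have htri : A.dist (x n) (y n) ≤ A.dist (x n) T.root + A.dist T.root (y n) :=
      hconn.dist_triangle
    have hcomm : A.dist (x n) T.root = n := by
      rw [SimpleGraph.dist_comm]; exact hdxr n
    rw [hcomm, hdyr n] at htri
    have hk2 : (A.dist (x n) (y n) : ℝ) ≤ (n:ℝ) + (n:ℝ) := by exact_mod_cast htri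
    rw [hg n]
    linarith
  set B := Real.logb r (dist a b / C₁) with hB_def
  have hrB : r ^ B = dist a b / C₁ := Real.rpow_logb hr0 hr1.ne (div_pos hdab hC1pos)
  have hgB : ∀ n, g n ≤ B := by
    intro n
    have h1 := keyA n
    rw [← hg n] at h1
    have h2 : r ^ B ≤ r ^ (g n) := by
      rw [hrB, div_le_iff₀ hC1pos]
      have := mul_comm C₁ (r ^ g n)
      linarith
    exact (Real.rpow_le_rpow_left_iff_of_base_lt_one hr0 hr1).mp h2
  have hbdd_ge : Filter.IsBoundedUnder (· ≥ ·) Filter.atTop g :=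
    Filter.isBoundedUnder_of ⟨0, fun n => hg0 n⟩
  have hbdd_le : Filter.IsBoundedUnder (· ≤ ·) Filter.atTop g :=
    Filter.isBoundedUnder_of ⟨B, fun n => hgB n⟩
  have hcob_ge : Filter.IsCoboundedUnder (· ≥ ·) Filter.atTop g :=
    hbdd_le.isCoboundedUnder_ge
  set m := Filter.liminf g Filter.atTop with hm_def
  have hmB : m ≤ B :=
    Filter.liminf_le_of_frequently_le (Filter.Frequently.of_forall hgB) hbdd_ge
  have hleft : (max C₁ RC)⁻¹ * dist a b ≤ r ^ m := by
    have h1 : r ^ B ≤ r ^ m := Real.rpow_le_rpow_of_exponent_ge hr0 hr1.le hmB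
    have h2 : (max C₁ RC)⁻¹ ≤ C₁⁻¹ := inv_anti₀ hC1pos (le_max_left _ _)
    calc (max C₁ RC)⁻¹ * dist a b ≤ C₁⁻¹ * dist a b :=
          mul_le_mul_of_nonneg_right h2 hdab.le
      _ = dist a b / C₁ := by rw [inv_mul_eq_div]
      _ = r ^ B := hrB.symm
      _ ≤ r ^ m := h1
  have hP : ∃ j : ℕ, κ * r ^ j < dist a b := by
    obtain ⟨j, hj⟩ := exists_pow_lt_of_lt_one (div_pos hdab hκ) hr1
    exact ⟨j, (lt_div_iff₀' hκ).mp hj⟩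
  have hright : r ^ m ≤ max C₁ RC * dist a b := by
    by_cases h0 : κ * r ^ 0 < dist a b
    · have hm0 : (0:ℝ) ≤ m :=
        Filter.le_liminf_of_le hcob_ge (Filter.Eventually.of_forall hg0)
      have h1 : r ^ m ≤ r ^ (0:ℝ) := Real.rpow_le_rpow_of_exponent_ge hr0 hr1.le hm0
      rw [Real.rpow_zero] at h1
      have hr32 : (1:ℝ) ≤ r ^ (-(3:ℝ)/2) := by
        have h := Real.rpow_le_rpow_of_exponent_ge hr0 hr1.le (by norm_num : -(3:ℝ)/2 ≤ 0)
        rwa [Real.rpow_zero] at h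
      have hκd : κ < dist a b := by simpa using h0
      have hone : (1:ℝ) ≤ RC * dist a b := by
        rw [hRC_def, div_mul_eq_mul_div, le_div_iff₀ hκ]
        nlinarith [mul_nonneg hdab.le (sub_nonneg.mpr hr32)]
      calc r ^ m ≤ 1 := h1
        _ ≤ RC * dist a b := hone
        _ ≤ max C₁ RC * dist a b :=
            mul_le_mul_of_nonneg_right (le_max_right _ _) hdab.le
    · set N := Nat.find hP with hN_def
      have hN : κ * r ^ N < dist a b := Nat.find_spec hP
      have hN0 : N ≠ 0 := by
        intro h
        rw [h] at hN
        exact h0 hN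
      set ℓ := N - 1 with hl_def
      have hNl : ℓ + 1 = N := by omega
      have hℓ : dist a b ≤ κ * r ^ ℓ := le_of_not_gt (Nat.find_min hP (by omega))
      have hℓ1 : κ * r ^ (ℓ + 1) < dist a b := by rw [hNl]; exact hN
      have hdistle : ∀ n, ℓ ≤ n → A.dist (x n) (y n) ≤ 2 * (n - ℓ) + 1 := by
        intro n hn
        obtain ⟨W1, hW1⟩ := ray_walk T Φ r κ hx ℓ (n - ℓ)
        obtain ⟨W2, hW2⟩ := ray_walk T Φ r κ hy ℓ (n - ℓ)
        have hxn : ℓ + (n - ℓ) = n := by omega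
        let W1' : A.Walk (x ℓ) (x n) := W1.copy rfl (congrArg x hxn)
        have hW1' : W1'.length = n - ℓ := by
          rw [SimpleGraph.Walk.length_copy]; exact hW1
        by_cases heq : x ℓ = y ℓ
        · let Wfull := W1'.reverse.append (W2.copy heq.symm (congrArg y hxn))
          have hlen : Wfull.length = (n - ℓ) + (n - ℓ) := by
            simp only [Wfull, SimpleGraph.Walk.length_append,
              SimpleGraph.Walk.length_reverse, SimpleGraph.Walk.length_copy, hW1', hW2]
          have hd := SimpleGraph.dist_le Wfull
          omega
        · have hEh : EhPhi T Φ r κ (x ℓ) (y ℓ) := by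
            refine ⟨(hx.2 ℓ).1.trans (hy.2 ℓ).1.symm, heq, ?_⟩
            rw [(hx.2 ℓ).1]
            exact (setDist_le (ha ℓ) (hb' ℓ)).trans hℓ
          have hadj : A.Adj (x ℓ) (y ℓ) :=
            show (T.G.Adj (x ℓ) (y ℓ) ∨ EhPhi T Φ r κ (x ℓ) (y ℓ) ∨ EhPhi T Φ r κ (y ℓ) (x ℓ)) ∧ x ℓ ≠ y ℓ from ⟨Or.inr (Or.inl hEh), heq⟩
          let Wfull := W1'.reverse.append
            (SimpleGraph.Walk.cons hadj (W2.copy rfl (congrArg y hxn)))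
          have hlen : Wfull.length = (n - ℓ) + ((n - ℓ) + 1) := by
            simp only [Wfull, SimpleGraph.Walk.length_append,
              SimpleGraph.Walk.length_reverse, SimpleGraph.Walk.length_copy,
              SimpleGraph.Walk.length_cons, hW1', hW2]
          have hd := SimpleGraph.dist_le Wfull
          omega
      have hgl : ∀ n, ℓ ≤ n → (ℓ:ℝ) - 1/2 ≤ g n := by
        intro n hn
        rw [hg n]
        have h1 := hdistle n hn
        have h2 : (A.dist (x n) (y n) : ℝ) ≤ 2*((n:ℝ) - (ℓ:ℝ)) + 1 := by
          have h3 := (Nat.cast_le (α := ℝ)).mpr h1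
          push_cast [Nat.cast_sub hn] at h3
          linarith
        linarith
      have hml : (ℓ:ℝ) - 1/2 ≤ m :=
        Filter.le_liminf_of_le hcob_ge
          (Filter.eventually_atTop.mpr ⟨ℓ, fun n hn => hgl n hn⟩)
      have h1 : r ^ m ≤ r ^ ((ℓ:ℝ) - 1/2) :=
        Real.rpow_le_rpow_of_exponent_ge hr0 hr1.le hml
      have h2 : r ^ ((ℓ:ℝ) - 1/2) = r ^ (ℓ+1) * r ^ (-(3:ℝ)/2) := by
        rw [← Real.rpow_natCast r (ℓ+1), ← Real.rpow_add hr0]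
        congr 1
        push_cast
        ring
      have h3 : (r:ℝ) ^ (ℓ+1) ≤ dist a b / κ := by
        rw [le_div_iff₀' hκ]
        exact hℓ1.le
      calc r ^ m ≤ r ^ ((ℓ:ℝ) - 1/2) := h1
        _ = r ^ (ℓ+1) * r ^ (-(3:ℝ)/2) := h2
        _ ≤ (dist a b / κ) * r ^ (-(3:ℝ)/2) :=
            mul_le_mul_of_nonneg_right h3 (Real.rpow_nonneg hr0.le _)
        _ = RC * dist a b := by rw [hRC_def]; ring
        _ ≤ max C₁ RC * dist a b :=
            mul_le_mul_of_nonneg_right (le_max_right _ _) hdab.le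
  exact ⟨⟨B, by rintro t ⟨n, rfl⟩; exact hgB n⟩, hleft, hright⟩


end HypIFS
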